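/- Let X be a vector field tangent to ker α_+ for a contact form α_+, and write α_+ = α_u − α_s with L_X α_u = r_u α_u, L_X α_s = r_s α_s. Assume r_u > 0 > r_s. Then L_X α_+ = r_u α_u − r_s α_s, and ι_X((L_X α_+) ∧ d(L_X α_+)) = −([r_u + X·ln r_u] − [r_s + X·ln(−r_s)]) (r_u α_u) ∧ (−r_s α_s) up to the sign convention; consequently L_X α_+ is a negative contact form (relative to the orientation where α_s ∧ α_u is positive) if and only if [r_u + X·ln r_u] > [r_s + X·ln(−r_s)] everywhere. -/
import Mathlib


/- STATEMENT 14: With α_+ = α_u − α_s, L_X α_u = r_u α_u, L_X α_s = r_s α_s, r_u > 0 > r_s: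
L_X α_+ = r_u α_u − r_s α_s, and with ρ_u := r_u + X·ln r_u = r_u + (X·r_u)/r_u and
ρ_s := r_s + X·ln(−r_s) = r_s + (X·r_s)/r_s, the contactness criterion
ι_X(β ∧ dβ) = −β ∧ L_X β for β := L_X α_+ yields
ι_X(β ∧ dβ) = (ρ_u − ρ_s)·(r_u·r_s) · α_s ∧ α_u, so L_X α_+ is a negative contact form
(α_s ∧ α_u being positive) iff ρ_u > ρ_s everywhere. -/
theorem stmt14 {M Ω1 Ω2 : Type*} [AddCommGroup Ω1] [Module ℝ Ω1] [Module (M → ℝ) Ω1] [IsScalarTower ℝ (M → ℝ) Ω1]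
    [AddCommGroup Ω2] [Module (M → ℝ) Ω2]
    (W : Ω1 →ₗ[M → ℝ] Ω1 →ₗ[M → ℝ] Ω2)       -- wedge product
    (hW : ∀ ω, W ω ω = 0)                       -- alternating
    (L : Ω1 →ₗ[ℝ] Ω1)                           -- Lie derivative L_X
    (D : (M → ℝ) →ₗ[ℝ] (M → ℝ))                 -- derivative along X
    (leibniz : ∀ (f : M → ℝ) (ω : Ω1), L (f • ω) = D f • ω + f • L ω)
    (αu αs : Ω1) (ru rs : M → ℝ)
    (hru : ∀ p, 0 < ru p) (hrs : ∀ p, rs p < 0)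
    (hLu : L αu = ru • αu) (hLs : L αs = rs • αs)
    (ρu ρs : M → ℝ)
    (hρu : ∀ p, ρu p = ru p + D ru p / ru p)    -- r_u + X·ln r_u
    (hρs : ∀ p, ρs p = rs p + D rs p / rs p)    -- r_s + X·ln(−r_s)
    (ι : Ω2)
    -- ι_X(β ∧ dβ) = −β ∧ L_X β for β := L_X(α_u − α_s):
    (hι : ι = - W (L (αu - αs)) (L (L (αu - αs)))) :
    L (αu - αs) = ru • αu - rs • αs ∧
    ι = ((ρu - ρs) * (ru * rs)) • W αs αu ∧
    ((∀ p, ((ρu - ρs) * (ru * rs)) p < 0) ↔ ∀ p, ρs p < ρu p) := by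
  have anti : ∀ a b : Ω1, W a b = - W b a := by
    intro a b
    have h := hW (a + b)
    simp [map_add, hW] at h
    exact eq_neg_of_add_eq_zero_right h
  have hβ : L (αu - αs) = ru • αu - rs • αs := by
    rw [map_sub, hLu, hLs]
  have hLL : L (L (αu - αs)) = (D ru + ru * ru) • αu - (D rs + rs * rs) • αs := by
    rw [hβ, map_sub, leibniz, leibniz, hLu, hLs, smul_smul, smul_smul, add_smul, add_smul]
  refine ⟨hβ, ?_, ?_⟩
  · rw [hι, hLL, hβ]
    have expand :
        W (ru • αu - rs • αs) ((D ru + ru * ru) • αu - (D rs + rs * rs) • αs)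
          = (ru * (D rs + rs * rs)) • W αs αu - (rs * (D ru + ru * ru)) • W αs αu := by
      simp only [map_sub, map_smul, LinearMap.sub_apply, LinearMap.smul_apply, hW,
        smul_zero, smul_smul, anti αu αs]
      module
    have hcoef : (ρu - ρs) * (ru * rs)
        = rs * (D ru + ru * ru) - ru * (D rs + rs * rs) := by
      funext p
      have h1 := (hru p).ne'
      have h2 := (hrs p).ne
      simp only [Pi.mul_apply, Pi.sub_apply, Pi.add_apply, hρu, hρs]
      field_simp
      ring
    rw [expand, hcoef]
    module
  · constructor
    · intro h p
      have hp := h p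
      have hneg : ru p * rs p < 0 := mul_neg_of_pos_of_neg (hru p) (hrs p)
      simp only [Pi.mul_apply, Pi.sub_apply] at hp
      nlinarith
    · intro h p
      have hp := h p
      have hneg : ru p * rs p < 0 := mul_neg_of_pos_of_neg (hru p) (hrs p)
      simp only [Pi.mul_apply, Pi.sub_apply]
      nlinarith
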